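/- Let K be a field, < a monomial order on ℕⁿ × {1,…,s}, and I a submodule of K[[x₁,…,xₙ]]^s whose initial module in(I) is an echelon: the exponent set {(α,ℓ) : x^α e_ℓ ∈ in(I)} is a finite disjoint union, over (α,ℓ) in a finite set V, of boxes {(α+β,ℓ) : β ∈ ℕⁿ with βᵢ = 0 for all i > n_{αℓ}} (a Janet basis of in(I) with scopes n_{αℓ}). For each (α,ℓ) ∈ V choose g_{αℓ} ∈ I with in(g_{αℓ}) = x^α e_ℓ. Then every f ∈ K[[x]]^s admits a unique decomposition f = Σ_{(α,ℓ)∈V} a_{αℓ}·g_{αℓ} + h where h ∈ co(I) and each a_{αℓ} is a power series depending only on the variables x₁,…,x_{n_{αℓ}}. -/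

import Mathlib

open MvPowerSeries

/-- A monomial order on `(Fin n →₀ ℕ) × Fin s`. -/
structure MonOrder (n s : ℕ) where
  lt : ((Fin n →₀ ℕ) × Fin s) → ((Fin n →₀ ℕ) × Fin s) → Prop
  trichotomous : ∀ a b, lt a b ∨ a = b ∨ lt b a
  trans : ∀ a b c, lt a b → lt b c → lt a c
  add_compat : ∀ a b (γ : Fin n →₀ ℕ), lt a b → lt (a.1 + γ, a.2) (b.1 + γ, b.2)
  zero_min : ∀ (α : Fin n →₀ ℕ) (ℓ : Fin s), (0 : Fin n →₀ ℕ) = α ∨ lt (0, ℓ) (α, ℓ)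
  wf : WellFounded lt

variable {K : Type*} [Field K] {n s : ℕ}

/-- Support of a power series vector. -/
def vsupp (g : Fin s → MvPowerSeries (Fin n) K) : Set ((Fin n →₀ ℕ) × Fin s) :=
  {p | MvPowerSeries.coeff p.1 (g p.2) ≠ 0}

/-- The monomial vector `x^α · e_ℓ`. -/
noncomputable def monVec (K : Type*) [Field K] {n s : ℕ} (α : Fin n →₀ ℕ) (ℓ : Fin s) :
    Fin s → MvPowerSeries (Fin n) K :=
  Pi.single ℓ (MvPowerSeries.monomial α (1 : K))

/-- `(α,ℓ)` is the exponent of the initial monomial vector of `g`. -/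
def IsInitial (o : MonOrder n s) (g : Fin s → MvPowerSeries (Fin n) K)
    (p : (Fin n →₀ ℕ) × Fin s) : Prop :=
  p ∈ vsupp g ∧ ∀ q ∈ vsupp g, q ≠ p → o.lt p q

/-- The initial module of a submodule `I` of `K[[x]]^s`. -/
noncomputable def inMod (o : MonOrder n s)
    (I : Submodule (MvPowerSeries (Fin n) K) (Fin s → MvPowerSeries (Fin n) K)) :
    Submodule (MvPowerSeries (Fin n) K) (Fin s → MvPowerSeries (Fin n) K) :=
  Submodule.span _ {v | ∃ g ∈ I, g ≠ 0 ∧ ∃ p, IsInitial o g p ∧ v = monVec K p.1 p.2}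

/-- The canonical direct monomial complement of `in(I)`. -/
def coMod (o : MonOrder n s)
    (I : Submodule (MvPowerSeries (Fin n) K) (Fin s → MvPowerSeries (Fin n) K)) :
    Set (Fin s → MvPowerSeries (Fin n) K) :=
  {h | ∀ p ∈ vsupp h, monVec K p.1 p.2 ∉ inMod o I}

/-- The box with vertex `(α,ℓ)` and scope `m`:
`{(α+β, ℓ) : β ∈ ℕⁿ, βᵢ = 0 for all i > m}`. -/
def boxAt {n s : ℕ} (p : (Fin n →₀ ℕ) × Fin s) (m : ℕ) : Set ((Fin n →₀ ℕ) × Fin s) :=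
  {q | ∃ β : Fin n →₀ ℕ, (∀ i : Fin n, m ≤ (i : ℕ) → β i = 0) ∧ q = (p.1 + β, p.2)}

/-- A power series depends only on the variables `x₁,…,x_m`. -/
def DependsOnFirst (m : ℕ) (f : MvPowerSeries (Fin n) K) : Prop :=
  ∀ β : Fin n →₀ ℕ, MvPowerSeries.coeff β f ≠ 0 → ∀ i : Fin n, m ≤ (i : ℕ) → β i = 0

section Aux

attribute [local instance] Classical.propDecidable

open Finset

lemma MonOrder.not_lt_self (o : MonOrder n s) (a : (Fin n →₀ ℕ) × Fin s) : ¬ o.lt a a :=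
  fun h => o.wf.asymmetric a a h h

def SuppIn {n : ℕ} (m : ℕ) (β : Fin n →₀ ℕ) : Prop := ∀ i : Fin n, m ≤ (i : ℕ) → β i = 0

def InBox (V : Finset ((Fin n →₀ ℕ) × Fin s)) (nsc : ((Fin n →₀ ℕ) × Fin s) → ℕ)
    (P : (Fin n →₀ ℕ) × Fin s) : Prop := ∃ q ∈ V, P ∈ boxAt q (nsc q)

noncomputable def boxOf (V : Finset ((Fin n →₀ ℕ) × Fin s)) (nsc : ((Fin n →₀ ℕ) × Fin s) → ℕ)
    (P : (Fin n →₀ ℕ) × Fin s) : (Fin n →₀ ℕ) × Fin s :=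
  if h : InBox V nsc P then h.choose else P

lemma boxOf_spec {V : Finset ((Fin n →₀ ℕ) × Fin s)} {nsc : ((Fin n →₀ ℕ) × Fin s) → ℕ}
    {P : (Fin n →₀ ℕ) × Fin s} (h : InBox V nsc P) :
    boxOf V nsc P ∈ V ∧ P ∈ boxAt (boxOf V nsc P) (nsc (boxOf V nsc P)) := by
  rw [boxOf, dif_pos h]
  exact ⟨h.choose_spec.1, h.choose_spec.2⟩

lemma boxOf_eq {V : Finset ((Fin n →₀ ℕ) × Fin s)} {nsc : ((Fin n →₀ ℕ) × Fin s) → ℕ}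
    (hdisj : ∀ p ∈ V, ∀ q ∈ V, p ≠ q → Disjoint (boxAt p (nsc p)) (boxAt q (nsc q)))
    {P q : (Fin n →₀ ℕ) × Fin s} (hq : q ∈ V) (hm : P ∈ boxAt q (nsc q)) :
    boxOf V nsc P = q := by
  have h : InBox V nsc P := ⟨q, hq, hm⟩
  obtain ⟨h1, h2⟩ := boxOf_spec h
  by_contra hne
  exact Set.disjoint_left.mp (hdisj _ h1 _ hq hne) h2 hm

noncomputable def lead (V : Finset ((Fin n →₀ ℕ) × Fin s)) (nsc : ((Fin n →₀ ℕ) × Fin s) → ℕ)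
    (g : ((Fin n →₀ ℕ) × Fin s) → (Fin s → MvPowerSeries (Fin n) K))
    (P : (Fin n →₀ ℕ) × Fin s) : K :=
  if InBox V nsc P then
    MvPowerSeries.coeff (boxOf V nsc P).1 (g (boxOf V nsc P) (boxOf V nsc P).2) else 1

lemma lead_ne {V : Finset ((Fin n →₀ ℕ) × Fin s)} {nsc : ((Fin n →₀ ℕ) × Fin s) → ℕ}
    {g : ((Fin n →₀ ℕ) × Fin s) → (Fin s → MvPowerSeries (Fin n) K)} (o : MonOrder n s)
    (hgin : ∀ p ∈ V, IsInitial o (g p) p) (P : (Fin n →₀ ℕ) × Fin s) :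
    lead V nsc g P ≠ 0 := by
  unfold lead
  by_cases h : InBox V nsc P
  · rw [if_pos h]
    exact (hgin _ (boxOf_spec h).1).1
  · rw [if_neg h]; exact one_ne_zero

noncomputable def TS (o : MonOrder n s) (V : Finset ((Fin n →₀ ℕ) × Fin s))
    (nsc : ((Fin n →₀ ℕ) × Fin s) → ℕ)
    (g : ((Fin n →₀ ℕ) × Fin s) → (Fin s → MvPowerSeries (Fin n) K))
    (E : ((Fin n →₀ ℕ) × Fin s) → K) (P : (Fin n →₀ ℕ) × Fin s) : K :=
  ∑ q ∈ V, ∑ bd ∈ antidiagonal P.1,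
    if SuppIn (nsc q) bd.1 ∧ o.lt (q.1 + bd.1, q.2) P then
      E (q.1 + bd.1, q.2) * MvPowerSeries.coeff bd.2 (g q P.2) else 0

noncomputable def DD (o : MonOrder n s) (V : Finset ((Fin n →₀ ℕ) × Fin s))
    (nsc : ((Fin n →₀ ℕ) × Fin s) → ℕ)
    (g : ((Fin n →₀ ℕ) × Fin s) → (Fin s → MvPowerSeries (Fin n) K))
    (f : Fin s → MvPowerSeries (Fin n) K) : ((Fin n →₀ ℕ) × Fin s) → K :=
  o.wf.fix fun P rec =>
    (MvPowerSeries.coeff P.1 (f P.2) - ∑ q ∈ V, ∑ bd ∈ antidiagonal P.1,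
      if hc : SuppIn (nsc q) bd.1 ∧ o.lt (q.1 + bd.1, q.2) P then
        rec (q.1 + bd.1, q.2) hc.2 * MvPowerSeries.coeff bd.2 (g q P.2) else 0)
      / lead V nsc g P

lemma DD_eq (o : MonOrder n s) (V : Finset ((Fin n →₀ ℕ) × Fin s))
    (nsc : ((Fin n →₀ ℕ) × Fin s) → ℕ)
    (g : ((Fin n →₀ ℕ) × Fin s) → (Fin s → MvPowerSeries (Fin n) K))
    (f : Fin s → MvPowerSeries (Fin n) K) (P : (Fin n →₀ ℕ) × Fin s) :
    DD o V nsc g f P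
      = (MvPowerSeries.coeff P.1 (f P.2) - TS o V nsc g (DD o V nsc g f) P)
        / lead V nsc g P := by
  unfold DD
  rw [WellFounded.fix_eq]
  unfold TS
  rfl

noncomputable def aEx (nsc : ((Fin n →₀ ℕ) × Fin s) → ℕ) (E : ((Fin n →₀ ℕ) × Fin s) → K)
    (q : (Fin n →₀ ℕ) × Fin s) : MvPowerSeries (Fin n) K :=
  fun β => if SuppIn (nsc q) β then E (q.1 + β, q.2) else 0

noncomputable def hEx (V : Finset ((Fin n →₀ ℕ) × Fin s)) (nsc : ((Fin n →₀ ℕ) × Fin s) → ℕ)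
    (E : ((Fin n →₀ ℕ) × Fin s) → K) (ℓ : Fin s) : MvPowerSeries (Fin n) K :=
  fun β => if InBox V nsc (β, ℓ) then 0 else E (β, ℓ)

lemma coeff_aEx (nsc : ((Fin n →₀ ℕ) × Fin s) → ℕ) (E : ((Fin n →₀ ℕ) × Fin s) → K)
    (q : (Fin n →₀ ℕ) × Fin s) (β : Fin n →₀ ℕ) :
    MvPowerSeries.coeff β (aEx nsc E q)
      = if SuppIn (nsc q) β then E (q.1 + β, q.2) else 0 := rfl

lemma coeff_hEx (V : Finset ((Fin n →₀ ℕ) × Fin s)) (nsc : ((Fin n →₀ ℕ) × Fin s) → ℕ)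
    (E : ((Fin n →₀ ℕ) × Fin s) → K) (P : (Fin n →₀ ℕ) × Fin s) :
    MvPowerSeries.coeff P.1 (hEx V nsc E P.2)
      = if InBox V nsc P then 0 else E P := rfl

/-- The key support analysis: a surviving "non-lt" term forces `P` to be in the box of `q`,
with `bd` the diagonal pair. -/
lemma crux {o : MonOrder n s} {V : Finset ((Fin n →₀ ℕ) × Fin s)}
    {nsc : ((Fin n →₀ ℕ) × Fin s) → ℕ}
    {g : ((Fin n →₀ ℕ) × Fin s) → (Fin s → MvPowerSeries (Fin n) K)}
    (hgin : ∀ p ∈ V, IsInitial o (g p) p)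
    {P q : (Fin n →₀ ℕ) × Fin s} {bd : (Fin n →₀ ℕ) × (Fin n →₀ ℕ)}
    (hqV : q ∈ V) (hbd : bd.1 + bd.2 = P.1) (h1 : SuppIn (nsc q) bd.1)
    (h2 : ¬ o.lt (q.1 + bd.1, q.2) P)
    (hz : MvPowerSeries.coeff bd.2 (g q P.2) ≠ 0) :
    bd.2 = q.1 ∧ P.2 = q.2 ∧ P ∈ boxAt q (nsc q) := by
  rcases eq_or_ne ((bd.2, P.2) : (Fin n →₀ ℕ) × Fin s) q with he | he
  · obtain ⟨h2', h3⟩ : bd.2 = q.1 ∧ P.2 = q.2 := by simpa [Prod.ext_iff] using he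
    have hfst : q.1 + bd.1 = P.1 := by rw [← h2', add_comm]; exact hbd
    exact ⟨h2', h3, ⟨bd.1, h1, by rw [hfst, ← h3]⟩⟩
  · exfalso
    have hmem : ((bd.2, P.2) : (Fin n →₀ ℕ) × Fin s) ∈ vsupp (g q) := hz
    have hlt : o.lt (q.1 + bd.1, q.2) (bd.2 + bd.1, P.2) :=
      o.add_compat q (bd.2, P.2) bd.1 ((hgin q hqV).2 _ hmem he)
    have hpair : ((bd.2 + bd.1, P.2) : (Fin n →₀ ℕ) × Fin s) = P := by
      rw [add_comm, hbd]
    exact h2 (hpair ▸ hlt)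

lemma split_sum (o : MonOrder n s) {V : Finset ((Fin n →₀ ℕ) × Fin s)}
    {nsc : ((Fin n →₀ ℕ) × Fin s) → ℕ}
    {g : ((Fin n →₀ ℕ) × Fin s) → (Fin s → MvPowerSeries (Fin n) K)}
    (hdisj : ∀ p ∈ V, ∀ q ∈ V, p ≠ q → Disjoint (boxAt p (nsc p)) (boxAt q (nsc q)))
    (hgin : ∀ p ∈ V, IsInitial o (g p) p)
    (E : ((Fin n →₀ ℕ) × Fin s) → K) (P : (Fin n →₀ ℕ) × Fin s) :
    (∑ q ∈ V, MvPowerSeries.coeff P.1 (aEx nsc E q * g q P.2))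
      + MvPowerSeries.coeff P.1 (hEx V nsc E P.2)
      = TS o V nsc g E P + E P * lead V nsc g P := by
  have hterm : ∀ q ∈ V, MvPowerSeries.coeff P.1 (aEx nsc E q * g q P.2)
      = (∑ bd ∈ antidiagonal P.1,
          if SuppIn (nsc q) bd.1 ∧ o.lt (q.1 + bd.1, q.2) P then
            E (q.1 + bd.1, q.2) * MvPowerSeries.coeff bd.2 (g q P.2) else 0)
        + (∑ bd ∈ antidiagonal P.1,
          if SuppIn (nsc q) bd.1 ∧ ¬ o.lt (q.1 + bd.1, q.2) P then
            E (q.1 + bd.1, q.2) * MvPowerSeries.coeff bd.2 (g q P.2) else 0) := by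
    intro q _
    rw [MvPowerSeries.coeff_mul, ← Finset.sum_add_distrib]
    refine Finset.sum_congr rfl fun bd _ => ?_
    rw [coeff_aEx]
    by_cases h1 : SuppIn (nsc q) bd.1
    · by_cases h2 : o.lt (q.1 + bd.1, q.2) P <;> simp [h1, h2]
    · simp [h1]
  have key : (∑ q ∈ V, ∑ bd ∈ antidiagonal P.1,
        if SuppIn (nsc q) bd.1 ∧ ¬ o.lt (q.1 + bd.1, q.2) P then
          E (q.1 + bd.1, q.2) * MvPowerSeries.coeff bd.2 (g q P.2) else 0)
      + MvPowerSeries.coeff P.1 (hEx V nsc E P.2) = E P * lead V nsc g P := by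
    by_cases hP : InBox V nsc P
    · obtain ⟨q0mem, q0box⟩ := boxOf_spec hP
      obtain ⟨β0, hβ0supp, hPeq⟩ := q0box
      have hP1 : P.1 = (boxOf V nsc P).1 + β0 := by conv_lhs => rw [hPeq]
      have hP2 : P.2 = (boxOf V nsc P).2 := by conv_lhs => rw [hPeq]
      rw [coeff_hEx, if_pos hP, add_zero]
      rw [Finset.sum_eq_single_of_mem (boxOf V nsc P) q0mem ?_]
      · rw [Finset.sum_eq_single_of_mem (β0, (boxOf V nsc P).1) ?_ ?_]
        · have hcond : SuppIn (nsc (boxOf V nsc P)) β0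
              ∧ ¬ o.lt ((boxOf V nsc P).1 + β0, (boxOf V nsc P).2) P := by
            refine ⟨hβ0supp, ?_⟩
            rw [← hPeq]
            exact o.not_lt_self P
          rw [if_pos hcond]
          unfold lead
          rw [if_pos hP, ← hPeq, ← hP2]
        · rw [Finset.HasAntidiagonal.mem_antidiagonal, hP1, add_comm]
        · intro bd hbd hne
          by_cases hc : SuppIn (nsc (boxOf V nsc P)) bd.1
              ∧ ¬ o.lt ((boxOf V nsc P).1 + bd.1, (boxOf V nsc P).2) P
          · rw [if_pos hc]
            by_cases hz : MvPowerSeries.coeff bd.2 (g (boxOf V nsc P) P.2) = 0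
            · rw [hz, mul_zero]
            · exfalso
              obtain ⟨hd2, _, _⟩ :=
                crux hgin q0mem (Finset.HasAntidiagonal.mem_antidiagonal.mp hbd) hc.1 hc.2 hz
              have hd1 : bd.1 = β0 := by
                have h := Finset.HasAntidiagonal.mem_antidiagonal.mp hbd
                rw [hd2, hP1] at h
                exact add_right_cancel (h.trans (add_comm _ _))
              exact hne (Prod.ext hd1 hd2)
          · rw [if_neg hc]
      · intro q hqV hqne
        refine Finset.sum_eq_zero fun bd hbd => ?_
        by_cases hc : SuppIn (nsc q) bd.1 ∧ ¬ o.lt (q.1 + bd.1, q.2) P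
        · rw [if_pos hc]
          by_cases hz : MvPowerSeries.coeff bd.2 (g q P.2) = 0
          · rw [hz, mul_zero]
          · exfalso
            obtain ⟨_, _, hbox⟩ :=
              crux hgin hqV (Finset.HasAntidiagonal.mem_antidiagonal.mp hbd) hc.1 hc.2 hz
            exact hqne (boxOf_eq hdisj hqV hbox).symm
        · rw [if_neg hc]
    · rw [coeff_hEx, if_neg hP]
      unfold lead
      rw [if_neg hP, mul_one]
      have hzero : (∑ q ∈ V, ∑ bd ∈ antidiagonal P.1,
          if SuppIn (nsc q) bd.1 ∧ ¬ o.lt (q.1 + bd.1, q.2) P then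
            E (q.1 + bd.1, q.2) * MvPowerSeries.coeff bd.2 (g q P.2) else 0) = 0 := by
        refine Finset.sum_eq_zero fun q hqV => Finset.sum_eq_zero fun bd hbd => ?_
        by_cases hc : SuppIn (nsc q) bd.1 ∧ ¬ o.lt (q.1 + bd.1, q.2) P
        · rw [if_pos hc]
          by_cases hz : MvPowerSeries.coeff bd.2 (g q P.2) = 0
          · rw [hz, mul_zero]
          · exfalso
            obtain ⟨_, _, hbox⟩ :=
              crux hgin hqV (Finset.HasAntidiagonal.mem_antidiagonal.mp hbd) hc.1 hc.2 hz
            exact hP ⟨q, hqV, hbox⟩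
        · rw [if_neg hc]
      rw [hzero, zero_add]
  rw [Finset.sum_congr rfl hterm, Finset.sum_add_distrib, add_assoc, key]
  rfl

noncomputable def Dof (V : Finset ((Fin n →₀ ℕ) × Fin s)) (nsc : ((Fin n →₀ ℕ) × Fin s) → ℕ)
    (a' : ((Fin n →₀ ℕ) × Fin s) → MvPowerSeries (Fin n) K)
    (h' : Fin s → MvPowerSeries (Fin n) K) (P : (Fin n →₀ ℕ) × Fin s) : K :=
  if h : InBox V nsc P then
    MvPowerSeries.coeff (P.1 - (boxOf V nsc P).1) (a' (boxOf V nsc P))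
  else MvPowerSeries.coeff P.1 (h' P.2)

lemma DependsOnFirst' {m : ℕ} {φ : MvPowerSeries (Fin n) K}
    (h : ∀ β : Fin n →₀ ℕ, MvPowerSeries.coeff β φ ≠ 0 →
      ∀ i : Fin n, m ≤ (i : ℕ) → β i = 0)
    {β : Fin n →₀ ℕ} (hβ : ¬ SuppIn m β) : MvPowerSeries.coeff β φ = 0 := by
  by_contra hne
  exact hβ (h β hne)

lemma aEx_of {V : Finset ((Fin n →₀ ℕ) × Fin s)} {nsc : ((Fin n →₀ ℕ) × Fin s) → ℕ}
    (hdisj : ∀ p ∈ V, ∀ q ∈ V, p ≠ q → Disjoint (boxAt p (nsc p)) (boxAt q (nsc q)))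
    {a' : ((Fin n →₀ ℕ) × Fin s) → MvPowerSeries (Fin n) K}
    {h' : Fin s → MvPowerSeries (Fin n) K}
    (hd' : ∀ p ∈ V, ∀ β : Fin n →₀ ℕ, MvPowerSeries.coeff β (a' p) ≠ 0 →
      ∀ i : Fin n, nsc p ≤ (i : ℕ) → β i = 0)
    {q : (Fin n →₀ ℕ) × Fin s} (hq : q ∈ V) :
    a' q = aEx nsc (Dof V nsc a' h') q := by
  refine MvPowerSeries.ext fun β => ?_
  rw [coeff_aEx]
  by_cases hβ : SuppIn (nsc q) β
  · rw [if_pos hβ]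
    have hQbox : ((q.1 + β, q.2) : (Fin n →₀ ℕ) × Fin s) ∈ boxAt q (nsc q) := ⟨β, hβ, rfl⟩
    have hQ : InBox V nsc (q.1 + β, q.2) := ⟨q, hq, hQbox⟩
    rw [Dof, dif_pos hQ, boxOf_eq hdisj hq hQbox]
    have hred : (((q.1 + β, q.2) : (Fin n →₀ ℕ) × Fin s).1 - q.1 : Fin n →₀ ℕ) = β :=
      add_tsub_cancel_left q.1 β
    rw [hred]
  · rw [if_neg hβ]
    exact DependsOnFirst' (hd' q hq) hβ

lemma hEx_of {V : Finset ((Fin n →₀ ℕ) × Fin s)} {nsc : ((Fin n →₀ ℕ) × Fin s) → ℕ}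
    {a' : ((Fin n →₀ ℕ) × Fin s) → MvPowerSeries (Fin n) K}
    {h' : Fin s → MvPowerSeries (Fin n) K}
    (hco' : ∀ P ∈ vsupp h', ¬ InBox V nsc P) :
    h' = hEx V nsc (Dof V nsc a' h') := by
  refine funext fun ℓ => MvPowerSeries.ext fun β => ?_
  have hc := coeff_hEx V nsc (Dof V nsc a' h') (β, ℓ)
  rw [hc]
  by_cases hb : InBox V nsc ((β, ℓ) : (Fin n →₀ ℕ) × Fin s)
  · rw [if_pos hb]
    by_contra hne
    exact hco' (β, ℓ) hne hb
  · rw [if_neg hb, Dof, dif_neg hb]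

lemma DD_spec (o : MonOrder n s) {V : Finset ((Fin n →₀ ℕ) × Fin s)}
    {nsc : ((Fin n →₀ ℕ) × Fin s) → ℕ}
    {g : ((Fin n →₀ ℕ) × Fin s) → (Fin s → MvPowerSeries (Fin n) K)}
    (hgin : ∀ p ∈ V, IsInitial o (g p) p)
    (f : Fin s → MvPowerSeries (Fin n) K) (P : (Fin n →₀ ℕ) × Fin s) :
    MvPowerSeries.coeff P.1 (f P.2)
      = TS o V nsc g (DD o V nsc g f) P + DD o V nsc g f P * lead V nsc g P := by
  rw [DD_eq o V nsc g f P, div_mul_cancel₀ _ (lead_ne o hgin P)]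
  ring

lemma D_unique (o : MonOrder n s) {V : Finset ((Fin n →₀ ℕ) × Fin s)}
    {nsc : ((Fin n →₀ ℕ) × Fin s) → ℕ}
    {g : ((Fin n →₀ ℕ) × Fin s) → (Fin s → MvPowerSeries (Fin n) K)}
    (hgin : ∀ p ∈ V, IsInitial o (g p) p)
    (f : Fin s → MvPowerSeries (Fin n) K) (E : ((Fin n →₀ ℕ) × Fin s) → K)
    (hid : ∀ P, MvPowerSeries.coeff P.1 (f P.2)
      = TS o V nsc g E P + E P * lead V nsc g P) :
    ∀ P, E P = DD o V nsc g f P := by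
  intro P
  refine o.wf.induction (C := fun Q => E Q = DD o V nsc g f Q) P fun Q ih => ?_
  have hT : TS o V nsc g E Q = TS o V nsc g (DD o V nsc g f) Q := by
    unfold TS
    refine Finset.sum_congr rfl fun q _ => Finset.sum_congr rfl fun bd _ => ?_
    by_cases hc : SuppIn (nsc q) bd.1 ∧ o.lt (q.1 + bd.1, q.2) Q
    · rw [if_pos hc, if_pos hc, ih _ hc.2]
    · rw [if_neg hc, if_neg hc]
  have hcmp := (hid Q).symm.trans (DD_spec o (nsc := nsc) hgin f Q)
  rw [hT] at hcmp
  exact mul_right_cancel₀ (lead_ne o hgin Q) (add_left_cancel hcmp)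

/-- Division theorem for echelon modules (Theorem 4.2). -/
theorem division_echelon_powerseries (hn : 1 ≤ n) (hs : 1 ≤ s) (o : MonOrder n s)
    (I : Submodule (MvPowerSeries (Fin n) K) (Fin s → MvPowerSeries (Fin n) K))
    (V : Finset ((Fin n →₀ ℕ) × Fin s)) (nsc : ((Fin n →₀ ℕ) × Fin s) → ℕ)
    (hscope : ∀ p ∈ V, nsc p ≤ n)
    (hdisj : ∀ p ∈ V, ∀ q ∈ V, p ≠ q → Disjoint (boxAt p (nsc p)) (boxAt q (nsc q)))
    (hech : {q | monVec K q.1 q.2 ∈ inMod o I} = ⋃ p ∈ V, boxAt p (nsc p))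
    (g : ((Fin n →₀ ℕ) × Fin s) → (Fin s → MvPowerSeries (Fin n) K))
    (hgI : ∀ p ∈ V, g p ∈ I) (hgin : ∀ p ∈ V, IsInitial o (g p) p) :
    ∀ f : Fin s → MvPowerSeries (Fin n) K,
      ∃ (a : ((Fin n →₀ ℕ) × Fin s) → MvPowerSeries (Fin n) K)
        (h : Fin s → MvPowerSeries (Fin n) K),
        (∀ p ∈ V, DependsOnFirst (nsc p) (a p)) ∧ h ∈ coMod o I ∧
        f = (∑ p ∈ V, a p • g p) + h ∧
        ∀ (a' : ((Fin n →₀ ℕ) × Fin s) → MvPowerSeries (Fin n) K)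
          (h' : Fin s → MvPowerSeries (Fin n) K),
          (∀ p ∈ V, DependsOnFirst (nsc p) (a' p)) → h' ∈ coMod o I →
          f = (∑ p ∈ V, a' p • g p) + h' →
          (∀ p ∈ V, a' p = a p) ∧ h' = h := by
  intro f
  refine ⟨aEx nsc (DD o V nsc g f), hEx V nsc (DD o V nsc g f), ?_, ?_, ?_, ?_⟩
  · intro p hp β hcoeff i hi
    rw [coeff_aEx] at hcoeff
    by_cases hβ : SuppIn (nsc p) β
    · exact hβ i hi
    · rw [if_neg hβ] at hcoeff
      exact absurd rfl hcoeff
  · intro P hPs hmem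
    have hU : P ∈ ⋃ p ∈ V, boxAt p (nsc p) := by rw [← hech]; exact hmem
    obtain ⟨q, hqV, hqb⟩ := Set.mem_iUnion₂.mp hU
    have h0 : MvPowerSeries.coeff P.1 (hEx V nsc (DD o V nsc g f) P.2) = 0 := by
      rw [coeff_hEx, if_pos ⟨q, hqV, hqb⟩]
    exact hPs h0
  · refine funext fun ℓ => MvPowerSeries.ext fun β => ?_
    have hcalc : MvPowerSeries.coeff β
          (((∑ p ∈ V, aEx nsc (DD o V nsc g f) p • g p) + hEx V nsc (DD o V nsc g f)) ℓ)
        = (∑ q ∈ V, MvPowerSeries.coeff β (aEx nsc (DD o V nsc g f) q * g q ℓ))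
          + MvPowerSeries.coeff β (hEx V nsc (DD o V nsc g f) ℓ) := by
      simp [Pi.add_apply, Finset.sum_apply, Pi.smul_apply, smul_eq_mul, map_add, map_sum]
    rw [hcalc]
    have h1 := DD_spec o (nsc := nsc) hgin f ((β, ℓ) : (Fin n →₀ ℕ) × Fin s)
    have h2 := split_sum o hdisj hgin (DD o V nsc g f) ((β, ℓ) : (Fin n →₀ ℕ) × Fin s)
    exact h1.trans h2.symm
  · intro a' h' hd' hco' heq'
    have hco'' : ∀ P ∈ vsupp h', ¬ InBox V nsc P := by
      intro P hPs hb
      obtain ⟨q, hqV, hqb⟩ := hb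
      have hmem : monVec K P.1 P.2 ∈ inMod o I := by
        have : P ∈ {q : (Fin n →₀ ℕ) × Fin s | monVec K q.1 q.2 ∈ inMod o I} := by
          rw [hech]
          exact Set.mem_iUnion₂.mpr ⟨q, hqV, hqb⟩
        exact this
      exact hco' P hPs hmem
    have ha : ∀ q ∈ V, a' q = aEx nsc (Dof V nsc a' h') q :=
      fun q hq => aEx_of hdisj (h' := h') hd' hq
    have hh : h' = hEx V nsc (Dof V nsc a' h') := hEx_of (a' := a') hco''
    have hid : ∀ P, MvPowerSeries.coeff P.1 (f P.2)
        = TS o V nsc g (Dof V nsc a' h') P + Dof V nsc a' h' P * lead V nsc g P := by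
      intro P
      have hcalc : MvPowerSeries.coeff P.1 (f P.2)
          = (∑ q ∈ V, MvPowerSeries.coeff P.1 (a' q * g q P.2))
            + MvPowerSeries.coeff P.1 (h' P.2) := by
        conv_lhs => rw [heq']
        simp [Pi.add_apply, Finset.sum_apply, Pi.smul_apply, smul_eq_mul, map_add, map_sum]
      have hsum : (∑ q ∈ V, MvPowerSeries.coeff P.1 (a' q * g q P.2))
          = ∑ q ∈ V, MvPowerSeries.coeff P.1 (aEx nsc (Dof V nsc a' h') q * g q P.2) :=
        Finset.sum_congr rfl fun q hq => by rw [ha q hq]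
      have hcH : MvPowerSeries.coeff P.1 (h' P.2)
          = MvPowerSeries.coeff P.1 (hEx V nsc (Dof V nsc a' h') P.2) := by
        conv_lhs => rw [hh]
      rw [hcalc, hsum, hcH]
      exact split_sum o hdisj hgin (Dof V nsc a' h') P
    have hDfun : Dof V nsc a' h' = DD o V nsc g f :=
      funext (D_unique o hgin f (Dof V nsc a' h') hid)
    constructor
    · intro p hp
      rw [ha p hp, hDfun]
    · rw [hh, hDfun]

end Aux
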